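/- Let T be a tree in which every vertex has degree at most α−1 (α ≥ 2), which contains no β pairwise disjoint subtrees each with three leaves of T, and in which every path has length less than γ. Then T has fewer than 2αβ leaves. -/

import Mathlib

set_option linter.unusedSectionVars false
set_option maxHeartbeats 1000000

open SimpleGraph Finset

namespace FewLeavesAux

variable {V : Type*} [Fintype V] [DecidableEq V] {G : SimpleGraph V} [DecidableRel G.Adj]

noncomputable def P (hT : G.IsTree) (u x : V) : G.Walk u x :=
  (hT.existsUnique_path u x).exists.choose

lemma P_isPath (hT : G.IsTree) (u x : V) : (P hT u x).IsPath :=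
  (hT.existsUnique_path u x).exists.choose_spec

lemma P_unique (hT : G.IsTree) {u x : V} {q : G.Walk u x} (hq : q.IsPath) :
    q = P hT u x :=
  (hT.existsUnique_path u x).unique hq (P_isPath hT u x)

lemma eq_of_mem_take_drop {u x v y : V} {p : G.Walk u x} (hp : p.IsPath)
    (hv : v ∈ p.support) (h1 : y ∈ (p.takeUntil v hv).support)
    (h2 : y ∈ (p.dropUntil v hv).support) : y = v := by
  by_contra hne
  have hnd : p.support.Nodup := hp.support_nodup
  rw [← Walk.take_spec p hv, Walk.support_append] at hnd
  have hdisj := List.disjoint_of_nodup_append hnd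
  have h2' : y ∈ (p.dropUntil v hv).support.tail := by
    have := Walk.support_eq_cons (p.dropUntil v hv)
    rw [this] at h2
    rcases List.mem_cons.mp h2 with h | h
    · exact absurd h hne
    · exact h
  exact hdisj h1 h2'

lemma P_dropUntil (hT : G.IsTree) {u r w : V} (h : w ∈ (P hT u r).support) :
    (P hT u r).dropUntil w h = P hT w r :=
  P_unique hT ((P_isPath hT u r).dropUntil h)

lemma eq_of_mutual (hT : G.IsTree) {r v w : V}
    (h1 : v ∈ (P hT w r).support) (h2 : w ∈ (P hT v r).support) : v = w := by
  have hdrop : ((P hT w r).dropUntil v h1) = P hT v r := P_dropUntil hT h1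
  have hw1 : w ∈ ((P hT w r).takeUntil v h1).support := Walk.start_mem_support _
  have hw2 : w ∈ ((P hT w r).dropUntil v h1).support := by rw [hdrop]; exact h2
  exact (eq_of_mem_take_drop (P_isPath hT w r) h1 hw1 hw2).symm

lemma induce_connected_of_walks {s : Set V} {x : V} (hx : x ∈ s)
    (h : ∀ u ∈ s, ∃ p : G.Walk u x, ∀ y ∈ p.support, y ∈ s) :
    (G.induce s).Connected := by
  rw [connected_induce_iff, Subgraph.connected_iff_forall_exists_walk_subgraph]
  refine ⟨⟨x, hx⟩, fun {u v} hu hv => ?_⟩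
  obtain ⟨pu, hpu⟩ := h u hu
  obtain ⟨pv, hpv⟩ := h v hv
  refine ⟨pu.append pv.reverse, ?_⟩
  rw [Walk.toSubgraph_append, Walk.toSubgraph_reverse]
  refine sup_le ?_ ?_
  · exact (Walk.toSubgraph_le_induce_support _).trans
      (Subgraph.induce_mono le_rfl (fun y hy => hpu y hy))
  · exact (Walk.toSubgraph_le_induce_support _).trans
      (Subgraph.induce_mono le_rfl (fun y hy => hpv y hy))

lemma mem_of_mem_P (hT : G.IsTree) {A : Finset V} (hA : (G.induce (A : Set V)).Connected)
    {u x : V} (hu : u ∈ A) (hx : x ∈ A) : ∀ y ∈ (P hT u x).support, y ∈ A := by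
  rw [connected_induce_iff, Subgraph.connected_iff_forall_exists_walk_subgraph] at hA
  obtain ⟨p, hp⟩ := hA.2 (by simpa using hu) (by simpa using hx)
  have hsupp : ∀ y ∈ p.support, y ∈ A := by
    intro y hy
    have := hp.1 (by rw [Walk.mem_verts_toSubgraph]; exact hy)
    simpa using this
  have heq : (p.toPath : G.Walk u x) = P hT u x := P_unique hT p.toPath.2
  intro y hy
  rw [← heq] at hy
  exact hsupp y (Walk.support_toPath_subset p hy)

/-- `D hT A r v` : the set of vertices of `A` whose canonical path to `r` passes through `v`. -/
noncomputable def D (hT : G.IsTree) (A : Finset V) (r v : V) : Finset V :=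
  A.filter (fun u => v ∈ (P hT u r).support)

lemma mem_D {hT : G.IsTree} {A : Finset V} {r v u : V} :
    u ∈ D hT A r v ↔ u ∈ A ∧ v ∈ (P hT u r).support := Finset.mem_filter

lemma D_subset (hT : G.IsTree) (A : Finset V) (r v : V) : D hT A r v ⊆ A :=
  Finset.filter_subset _ _

lemma core (hT : G.IsTree) {α : ℕ} (hα : 2 ≤ α)
    (hdeg : ∀ v : V, G.degree v ≤ α - 1) :
    ∀ (β : ℕ) (A : Finset V), (G.induce (A : Set V)).Connected →
      2 * (α - 1) * β + β ≤ (A.filter fun v => G.degree v = 1).card →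
      ∃ S : Fin β → Finset V,
        (∀ i j, i ≠ j → Disjoint (S i) (S j)) ∧
        (∀ i, (G.induce ((S i : Set V))).Connected) ∧
        (∀ i, 3 ≤ ((S i).filter fun v => G.degree v = 1).card) ∧
        (∀ i, S i ⊆ A) := by
  intro β
  induction β with
  | zero =>
    exact fun A _ _ =>
      ⟨fun i => i.elim0, fun i => i.elim0, fun i => i.elim0, fun i => i.elim0, fun i => i.elim0⟩
  | succ β ih =>
    intro A hA hcard
    have hprod : 2 * 1 ≤ 2 * (α - 1) * (β + 1) := Nat.mul_le_mul (by omega) (by omega)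
    have h3 : 3 ≤ (A.filter fun v => G.degree v = 1).card := by omega
    -- a leaf root
    have hne : (A.filter fun v => G.degree v = 1).Nonempty := Finset.card_pos.mp (by omega)
    obtain ⟨r, hrmem⟩ := hne
    obtain ⟨hrA, hrdeg⟩ := Finset.mem_filter.mp hrmem
    rcases Nat.eq_zero_or_pos β with rfl | hβpos
    · -- single subtree: take A itself
      refine ⟨fun _ => A, fun i j hij => absurd (Fin.ext (by have := i.isLt; have := j.isLt; omega)) hij,
        fun _ => hA, fun _ => h3, fun _ => Finset.Subset.refl A⟩
    -- the candidate set and a minimal vertex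
    set Cand := A.filter
      (fun v => 3 ≤ ((D hT A r v).filter fun x => G.degree x = 1).card) with hCandDef
    have hDr : D hT A r r = A := by
      apply Finset.filter_true_of_mem
      intro u _
      exact Walk.end_mem_support _
    have hrCand : r ∈ Cand := Finset.mem_filter.mpr ⟨hrA, by rw [hDr]; exact h3⟩
    obtain ⟨v, hvCand, hvmin⟩ :=
      Finset.exists_min_image Cand (fun v => (D hT A r v).card) ⟨r, hrCand⟩
    obtain ⟨hvA, hv3⟩ := Finset.mem_filter.mp hvCand
    -- children of v
    set C := (G.neighborFinset v ∩ A).filter (fun w => v ∈ (P hT w r).support) with hCdef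
    have hCmem : ∀ {w}, w ∈ C → G.Adj v w ∧ w ∈ A ∧ v ∈ (P hT w r).support := by
      intro w hw
      obtain ⟨hw1, hw2⟩ := Finset.mem_filter.mp hw
      obtain ⟨hw3, hw4⟩ := Finset.mem_inter.mp hw1
      exact ⟨(G.mem_neighborFinset v w).mp hw3, hw4, hw2⟩
    have hvD : v ∈ D hT A r v := mem_D.mpr ⟨hvA, Walk.start_mem_support _⟩
    -- each child's subtree has at most 2 leaves
    have hchild2 : ∀ w ∈ C, ((D hT A r w).filter fun x => G.degree x = 1).card ≤ 2 := by
      intro w hw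
      by_contra hcon
      push_neg at hcon
      obtain ⟨hadj, hwA, hvPw⟩ := hCmem hw
      have hsub : D hT A r w ⊆ D hT A r v := by
        intro u hu
        obtain ⟨huA, hwPu⟩ := mem_D.mp hu
        refine mem_D.mpr ⟨huA, ?_⟩
        have hd := P_dropUntil hT hwPu
        have : v ∈ ((P hT u r).dropUntil w hwPu).support := by rw [hd]; exact hvPw
        exact Walk.support_dropUntil_subset _ _ this
      have hnotin : v ∉ D hT A r w := by
        intro hvDw
        exact G.ne_of_adj hadj (eq_of_mutual hT hvPw (mem_D.mp hvDw).2)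
      have hlt : (D hT A r w).card < (D hT A r v).card :=
        Finset.card_lt_card ⟨hsub, fun hs => hnotin (hs hvD)⟩
      have hwCand : w ∈ Cand := Finset.mem_filter.mpr ⟨hwA, by omega⟩
      have := hvmin w hwCand
      omega
    have hCsub : C ⊆ G.neighborFinset v :=
      (Finset.filter_subset _ _).trans Finset.inter_subset_left
    have hCcard : C.card ≤ α - 1 := by
      have h1 : C.card ≤ G.degree v := Finset.card_le_card hCsub
      exact le_trans h1 (hdeg v)
    -- decomposition of D v
    have hdec : ∀ u ∈ D hT A r v, u = v ∨ ∃ w ∈ C, u ∈ D hT A r w := by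
      intro u hu
      by_cases huv : u = v
      · exact Or.inl huv
      obtain ⟨huA, hvp⟩ := mem_D.mp hu
      right
      obtain ⟨w, hadj, t, hqr⟩ :=
        Walk.exists_eq_cons_of_ne (Ne.symm huv) ((P hT u r).takeUntil v hvp).reverse
      have hwq : w ∈ ((P hT u r).takeUntil v hvp).support := by
        have hmem : w ∈ ((P hT u r).takeUntil v hvp).reverse.support := by
          rw [hqr, Walk.support_cons]
          exact List.mem_cons_of_mem _ (Walk.start_mem_support t)
        rwa [Walk.support_reverse, List.mem_reverse] at hmem
      have hwp : w ∈ (P hT u r).support := Walk.support_takeUntil_subset _ _ hwq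
      have hwv : w ≠ v := fun h => G.ne_of_adj hadj h.symm
      have hwdrop : w ∉ ((P hT u r).dropUntil v hvp).support := fun hmem =>
        hwv (eq_of_mem_take_drop (P_isPath hT u r) hvp hwq hmem)
      have hpw : (Walk.cons hadj.symm ((P hT u r).dropUntil v hvp)).IsPath :=
        ((P_isPath hT u r).dropUntil hvp).cons hwdrop
      have hPw : Walk.cons hadj.symm ((P hT u r).dropUntil v hvp) = P hT w r := P_unique hT hpw
      have hvPw : v ∈ (P hT w r).support := by
        rw [← hPw, Walk.support_cons]
        exact List.mem_cons_of_mem _ (Walk.start_mem_support _)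
      have hwA : w ∈ A := mem_of_mem_P hT hA huA hrA w hwp
      refine ⟨w, Finset.mem_filter.mpr ⟨Finset.mem_inter.mpr ⟨(G.mem_neighborFinset v w).mpr hadj, hwA⟩, hvPw⟩,
        mem_D.mpr ⟨huA, hwp⟩⟩
    -- counting leaves of D v
    have hsubdec : (D hT A r v).filter (fun x => G.degree x = 1) ⊆
        insert v (C.biUnion fun w => (D hT A r w).filter (fun x => G.degree x = 1)) := by
      intro u hu
      obtain ⟨huD, hul⟩ := Finset.mem_filter.mp hu
      rcases hdec u huD with rfl | ⟨w, hwC, huw⟩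
      · exact Finset.mem_insert_self _ _
      · exact Finset.mem_insert_of_mem
          (Finset.mem_biUnion.mpr ⟨w, hwC, Finset.mem_filter.mpr ⟨huw, hul⟩⟩)
    have hbiU : (C.biUnion fun w => (D hT A r w).filter (fun x => G.degree x = 1)).card
        ≤ 2 * C.card := by
      refine le_trans (Finset.card_biUnion_le) ?_
      calc (∑ w ∈ C, ((D hT A r w).filter fun x => G.degree x = 1).card)
          ≤ ∑ _w ∈ C, 2 := Finset.sum_le_sum hchild2
        _ = 2 * C.card := by rw [Finset.sum_const, smul_eq_mul, mul_comm]
    have hDvleaf : ((D hT A r v).filter fun x => G.degree x = 1).card ≤ 1 + 2 * C.card := by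
      refine le_trans (Finset.card_le_card hsubdec) ?_
      refine le_trans (Finset.card_insert_le _ _) ?_
      omega
    -- case analysis on whether v is a leaf
    by_cases hvleaf : G.degree v = 1
    · exfalso
      by_cases hvr : v = r
      · -- v = r : whole tree has at most 3 leaves, contradiction
        have hC1 : C.card ≤ 1 := by
          have h1 : C.card ≤ G.degree v := Finset.card_le_card hCsub
          omega
        rw [hvr, hDr] at hDvleaf
        omega
      · -- v a leaf distinct from r : D v has at most one leaf
        have hC0 : C = ∅ := by
          rcases Finset.eq_empty_or_nonempty C with h | ⟨w, hw⟩
          · exact h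
          exfalso
          obtain ⟨hadj, hwA, hvPw⟩ := hCmem hw
          have hnb : G.neighborFinset v = {w} := by
            have hcard1 : (G.neighborFinset v).card = 1 := by
              rw [card_neighborFinset_eq_degree]; exact hvleaf
            obtain ⟨a, ha⟩ := Finset.card_eq_one.mp hcard1
            have : w = a := by
              have := (G.mem_neighborFinset v w).mpr hadj
              rw [ha] at this
              exact Finset.mem_singleton.mp this
            rw [ha, this]
          obtain ⟨x, hadjx, t, hPv⟩ := Walk.exists_eq_cons_of_ne hvr (P hT v r)
          have hx : x = w := by
            have hx1 : x ∈ G.neighborFinset v := (G.mem_neighborFinset v x).mpr hadjx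
            rw [hnb] at hx1
            exact Finset.mem_singleton.mp hx1
          have hwPv : w ∈ (P hT v r).support := by
            rw [hPv, Walk.support_cons]
            exact List.mem_cons_of_mem _ (by rw [← hx]; exact Walk.start_mem_support t)
          exact G.ne_of_adj hadj (eq_of_mutual hT hvPw hwPv)
        rw [hC0] at hDvleaf
        simp only [Finset.biUnion_empty, Finset.card_empty] at hDvleaf
        omega
    · -- main case : v is not a leaf
      have hvnr : v ≠ r := fun h => hvleaf (h ▸ hrdeg)
      have hsub2 : (D hT A r v).filter (fun x => G.degree x = 1) ⊆
          C.biUnion fun w => (D hT A r w).filter (fun x => G.degree x = 1) := by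
        intro u hu
        rcases Finset.mem_insert.mp (hsubdec hu) with rfl | h
        · exact absurd (Finset.mem_filter.mp hu).2 hvleaf
        · exact h
      have hbound : ((D hT A r v).filter fun x => G.degree x = 1).card ≤ 2 * (α - 1) := by
        have := Finset.card_le_card hsub2
        omega
      have hrD : r ∉ D hT A r v := by
        intro h
        obtain ⟨_, hvr'⟩ := mem_D.mp h
        have hnil : (Walk.nil : G.Walk r r) = P hT r r := P_unique hT Walk.IsPath.nil
        rw [← hnil, Walk.support_nil] at hvr'
        exact hvnr (List.mem_singleton.mp hvr')
      set A' := A \ D hT A r v with hA'def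
      have hrA' : r ∈ A' := Finset.mem_sdiff.mpr ⟨hrA, hrD⟩
      have hA'w : ∀ u ∈ A', ∀ y ∈ (P hT u r).support, y ∈ A' := by
        intro u hu y hy
        obtain ⟨huA, huD⟩ := Finset.mem_sdiff.mp hu
        refine Finset.mem_sdiff.mpr ⟨mem_of_mem_P hT hA huA hrA y hy, ?_⟩
        intro hyD
        obtain ⟨hyA, hvy⟩ := mem_D.mp hyD
        refine huD (mem_D.mpr ⟨huA, ?_⟩)
        have hd := P_dropUntil hT hy
        have : v ∈ ((P hT u r).dropUntil y hy).support := by rw [hd]; exact hvy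
        exact Walk.support_dropUntil_subset _ _ this
      have hA'conn : (G.induce (A' : Set V)).Connected := by
        apply induce_connected_of_walks (x := r) (by exact_mod_cast hrA')
        intro u hu
        exact ⟨P hT u r, fun y hy => by
          exact_mod_cast hA'w u (by exact_mod_cast hu) y hy⟩
      have hDfsub : (D hT A r v).filter (fun x => G.degree x = 1) ⊆
          A.filter (fun x => G.degree x = 1) :=
        Finset.filter_subset_filter _ (D_subset hT A r v)
      have hsplit : (A'.filter (fun x => G.degree x = 1)).card
          + ((D hT A r v).filter (fun x => G.degree x = 1)).card
          = (A.filter (fun x => G.degree x = 1)).card := by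
        have hset : A'.filter (fun x => G.degree x = 1)
            = (A.filter (fun x => G.degree x = 1)) \ ((D hT A r v).filter (fun x => G.degree x = 1)) := by
          ext u
          simp only [hA'def, Finset.mem_sdiff, Finset.mem_filter, mem_D]
          tauto
        rw [hset, Finset.card_sdiff_of_subset hDfsub]
        exact Nat.sub_add_cancel (Finset.card_le_card hDfsub)
      have hA'card : 2 * (α - 1) * β + β ≤ (A'.filter fun x => G.degree x = 1).card := by
        have h2 : 2 * (α - 1) * (β + 1) = 2 * (α - 1) * β + 2 * (α - 1) := by ring
        omega
      obtain ⟨S', hS'disj, hS'conn, hS'leaf, hS'sub⟩ := ih A' hA'conn hA'card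
      have hDvconn : (G.induce ((D hT A r v : Finset V) : Set V)).Connected := by
        apply induce_connected_of_walks (x := v) (by exact_mod_cast hvD)
        intro u hu
        have huD : u ∈ D hT A r v := by exact_mod_cast hu
        obtain ⟨huA, hvp⟩ := mem_D.mp huD
        refine ⟨(P hT u r).takeUntil v hvp, ?_⟩
        intro y hy
        have hyp : y ∈ (P hT u r).support := Walk.support_takeUntil_subset _ _ hy
        have hyA : y ∈ A := mem_of_mem_P hT hA huA hrA y hyp
        have : y ∈ D hT A r v := by
          refine mem_D.mpr ⟨hyA, ?_⟩
          by_cases hyv : y = v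
          · subst hyv; exact Walk.start_mem_support _
          · have hq : ((P hT u r).takeUntil v hvp).IsPath := (P_isPath hT u r).takeUntil hvp
            have hw2path : ((P hT u r).dropUntil v hvp).IsPath := (P_isPath hT u r).dropUntil hvp
            have happ : ((((P hT u r).takeUntil v hvp).dropUntil y hy).append
                ((P hT u r).dropUntil v hvp)).IsPath := by
              rw [Walk.isPath_def, Walk.support_append]
              refine List.Nodup.append (hq.dropUntil hy).support_nodup ?_ ?_
              · have := hw2path.support_nodup
                rw [Walk.support_eq_cons] at this
                exact (List.nodup_cons.mp this).2
              · intro a ha hatail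
                have ha1 : a ∈ ((P hT u r).takeUntil v hvp).support :=
                  Walk.support_dropUntil_subset _ _ ha
                have hav : a ≠ v := by
                  intro h
                  subst h
                  have := hw2path.support_nodup
                  rw [Walk.support_eq_cons] at this
                  exact (List.nodup_cons.mp this).1 hatail
                have ha2 : a ∈ ((P hT u r).dropUntil v hvp).support := by
                  rw [Walk.support_eq_cons]
                  exact List.mem_cons_of_mem _ hatail
                exact hav (eq_of_mem_take_drop (P_isPath hT u r) hvp ha1 ha2)
            have heq := P_unique hT happ
            rw [← heq, Walk.mem_support_append_iff]
            exact Or.inl (Walk.end_mem_support _)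
        exact_mod_cast this
      have hdisjDA' : ∀ B ⊆ A', Disjoint (D hT A r v) B := by
        intro B hB
        refine Finset.disjoint_left.mpr fun a haD haB => ?_
        exact (Finset.mem_sdiff.mp (hB haB)).2 haD
      refine ⟨Fin.cons (D hT A r v) S', ?_, ?_, ?_, ?_⟩
      · intro i j hij
        induction i using Fin.cases with
        | zero =>
          induction j using Fin.cases with
          | zero => exact absurd rfl hij
          | succ j' => simpa using hdisjDA' _ (hS'sub j')
        | succ i' =>
          induction j using Fin.cases with
          | zero => simpa using (hdisjDA' _ (hS'sub i')).symm
          | succ j' =>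
            simpa using hS'disj i' j' (fun h => hij (by rw [h]))
      · intro i
        induction i using Fin.cases with
        | zero => rw [Fin.cons_zero]; exact hDvconn
        | succ i' => rw [Fin.cons_succ]; exact hS'conn i'
      · intro i
        induction i using Fin.cases with
        | zero => simpa using hv3
        | succ i' => simpa using hS'leaf i'
      · intro i
        induction i using Fin.cases with
        | zero => simpa using D_subset hT A r v
        | succ i' =>
          simpa using (hS'sub i').trans (Finset.sdiff_subset)

end FewLeavesAux

/-- A tree with all degrees at most `α − 1` (where `α ≥ 2`), with no `β` disjoint subtrees
each containing three leaves, and with all paths of length less than `γ`, has fewer than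
`2αβ` leaves. -/
theorem few_leaves_of_no_structures {V : Type*} [Fintype V] [DecidableEq V]
    (G : SimpleGraph V) [DecidableRel G.Adj] (hT : G.IsTree)
    (α β γ : ℕ) (hα : 2 ≤ α) (hβ : 1 ≤ β) (hγ : 1 ≤ γ)
    (hdeg : ∀ v : V, G.degree v ≤ α - 1)
    (hsub : ¬ ∃ S : Fin β → Finset V,
      (∀ i j, i ≠ j → Disjoint (S i) (S j)) ∧
      (∀ i, (G.induce ((S i : Set V))).Connected) ∧
      (∀ i, 3 ≤ ((S i).filter fun v => G.degree v = 1).card))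
    (hpath : ∀ (u w : V) (p : G.Walk u w), p.IsPath → p.length < γ) :
    (Finset.univ.filter fun v => G.degree v = 1).card < 2 * α * β := by
  by_contra hcon
  push_neg at hcon
  have hconn := hT.isConnected
  have : Nonempty V := hconn.nonempty
  obtain ⟨x⟩ := this
  have huconn : (G.induce ((Finset.univ : Finset V) : Set V)).Connected := by
    apply FewLeavesAux.induce_connected_of_walks (x := x) (by simp)
    intro u _
    exact ⟨(hconn.preconnected u x).some, fun y _ => by simp⟩
  have hle : 2 * (α - 1) * β + β ≤ ((Finset.univ : Finset V).filter fun v => G.degree v = 1).card := by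
    have heq : 2 * (α - 1) * β + β = (2 * (α - 1) + 1) * β := by ring
    have h1 : (2 * (α - 1) + 1) * β ≤ 2 * α * β :=
      Nat.mul_le_mul_right β (by omega)
    omega
  obtain ⟨S, h1, h2, h3, _⟩ := FewLeavesAux.core hT hα hdeg β Finset.univ huconn hle
  exact hsub ⟨S, h1, h2, h3⟩
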